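/- Suppose α is an ordinal with 3 ≤ α ≤ κ and H is an ideal on P_κ(λ) with cof(H) < non_κ(J⁺ → (J⁺, α)²). Then H⁺ →_{κ,κ} (H⁺; α)². -/

import Mathlib

open Cardinal Set

namespace PaperFormal

noncomputable section

/-- The least (small) cardinality of a family `F : Set X` satisfying `P`. -/
def leastCard {X : Type 1} (P : Set X → Prop) : Cardinal.{0} :=
  sInf {c : Cardinal.{0} | ∃ F : Set X, P F ∧ Cardinal.lift.{1} c = #F}

/-- The collection of (codings of) functions from `κ` to `κ`. -/
def funOn (κ : Cardinal.{0}) : Set (Ordinal.{0} → Ordinal.{0}) :=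
  {f | ∀ α < κ.ord, f α < κ.ord}

/-- The unequality number `U_κ`. -/
def uneq (κ : Cardinal.{0}) : Cardinal.{0} :=
  leastCard fun F : Set (Ordinal.{0} → Ordinal.{0}) => F ⊆ funOn κ ∧
    ∀ g ∈ funOn κ, ∃ f ∈ F, {α | α < κ.ord ∧ f α = g α} = ∅

/-- The dominating number `d_κ`. -/
def domNum (κ : Cardinal.{0}) : Cardinal.{0} :=
  leastCard fun F : Set (Ordinal.{0} → Ordinal.{0}) => F ⊆ funOn κ ∧
    ∀ g ∈ funOn κ, ∃ f ∈ F, ∀ α < κ.ord, g α < f α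

/-- The number `d̄_κ`. -/
def domBar (κ : Cardinal.{0}) : Cardinal.{0} :=
  leastCard fun X : Set (Ordinal.{0} → Ordinal.{0}) => X ⊆ funOn κ ∧
    ∀ g ∈ funOn κ, ∃ x ⊆ X, x.Nonempty ∧ #x < Cardinal.lift.{1} κ ∧
      ∀ α < κ.ord, g α < sSup {o | ∃ f ∈ x, f α = o}

/-- The generalized Cantor space `^ρ2`, with points coded as subsets of `Iio ρ.ord`. -/
def cantor (ρ : Cardinal.{0}) : Set (Set Ordinal.{0}) := {x | x ⊆ Iio ρ.ord}

/-- A forcing condition: a pair `(a, t)` with `t ⊆ a ⊆ Iio ρ.ord` and `|a| < ν`. -/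
def IsCond (ν ρ : Cardinal.{0}) (a t : Set Ordinal.{0}) : Prop :=
  a ⊆ Iio ρ.ord ∧ t ⊆ a ∧ #a < Cardinal.lift.{1} ν

/-- The basic open set determined by a condition. -/
def basicOpen (ρ : Cardinal.{0}) (a t : Set Ordinal.{0}) : Set (Set Ordinal.{0}) :=
  {x | x ⊆ Iio ρ.ord ∧ x ∩ a = t}

/-- Dense open subsets of `^ρ2` (for the `<ν`-support topology). -/
def DenseOpen (ν ρ : Cardinal.{0}) (D : Set (Set Ordinal.{0})) : Prop :=
  D ⊆ cantor ρ ∧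
  (∀ x ∈ D, ∃ a t, IsCond ν ρ a t ∧ x ∈ basicOpen ρ a t ∧ basicOpen ρ a t ⊆ D) ∧
  (∀ a t, IsCond ν ρ a t → (basicOpen ρ a t ∩ D).Nonempty)

/-- Members of `M_{ν,ρ}`. -/
def Meager (ν ρ : Cardinal.{0}) (W : Set (Set Ordinal.{0})) : Prop :=
  W ⊆ cantor ρ ∧ ∃ X : Set (Set (Set Ordinal.{0})), X.Nonempty ∧
    #X ≤ Cardinal.lift.{1} ν ∧ (∀ D ∈ X, DenseOpen ν ρ D) ∧ W ∩ ⋂₀ X = ∅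

/-- The covering number for category `cov(M_{ν,ρ})`. -/
def covM (ν ρ : Cardinal.{0}) : Cardinal.{0} :=
  leastCard fun Y : Set (Set (Set Ordinal.{0})) =>
    (∀ W ∈ Y, Meager ν ρ W) ∧ ⋃₀ Y = cantor ρ

/-- A (`κ`-complete) ideal on `κ`. -/
structure IdealK (κ : Cardinal.{0}) where
  mem : Set (Set Ordinal.{0})
  subset_iio : ∀ A ∈ mem, A ⊆ Iio κ.ord
  singleton_mem : ∀ α < κ.ord, {α} ∈ mem
  subset_mem : ∀ A ∈ mem, ∀ B ⊆ A, B ∈ mem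
  sUnion_mem : ∀ X : Set (Set Ordinal.{0}), X ⊆ mem → #X < Cardinal.lift.{1} κ → ⋃₀ X ∈ mem
  ne_top : Iio κ.ord ∉ mem

/-- `J⁺`, the sets (⊆ κ) not in the ideal. -/
def IdealK.plus {κ : Cardinal.{0}} (J : IdealK κ) : Set (Set Ordinal.{0}) :=
  {A | A ⊆ Iio κ.ord ∧ A ∉ J.mem}

/-- `cof(J)`. -/
def IdealK.cof {κ : Cardinal.{0}} (J : IdealK κ) : Cardinal.{0} :=
  leastCard fun X : Set (Set Ordinal.{0}) =>
    X ⊆ J.mem ∧ ∀ A, A ∈ J.mem ↔ ∃ B ∈ X, A ⊆ B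

/-- `cof̄(J)`. -/
def IdealK.cofBar {κ : Cardinal.{0}} (J : IdealK κ) : Cardinal.{0} :=
  leastCard fun X : Set (Set Ordinal.{0}) =>
    X ⊆ J.mem ∧ ∀ A ∈ J.mem, ∃ x ⊆ X, #x < Cardinal.lift.{1} κ ∧ A ⊆ ⋃₀ x

/-- `non_κ(P)`. -/
def nonK (κ : Cardinal.{0}) (P : IdealK κ → Prop) : Cardinal.{0} :=
  sInf {c | ∃ J : IdealK κ, J.cof = c ∧ ¬ P J}

/-- `non̄_κ(P)`. -/
def nonBarK (κ : Cardinal.{0}) (P : IdealK κ → Prop) : Cardinal.{0} :=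
  sInf {c | ∃ J : IdealK κ, J.cofBar = c ∧ ¬ P J}

/-- Weak `P`-point. -/
def WeakPPoint {κ : Cardinal.{0}} (J : IdealK κ) : Prop :=
  ∀ A ∈ J.plus, ∀ f : Ordinal.{0} → Ordinal.{0},
    (∀ α ∈ A, f α < κ.ord) → (∀ β, {α ∈ A | f α = β} ∈ J.mem) →
    ∃ B ∈ J.plus, B ⊆ A ∧ ∀ β, #{α ∈ B | f α = β} < Cardinal.lift.{1} κ

/-- Weak `Q`-point. -/
def WeakQPoint {κ : Cardinal.{0}} (J : IdealK κ) : Prop :=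
  ∀ A ∈ J.plus, ∀ g ∈ funOn κ,
    ∃ B ∈ J.plus, B ⊆ A ∧ ∀ α ∈ B, ∀ β ∈ B, α < β → g α < β

/-- Weakly selective ideal. -/
def WeaklySelective {κ : Cardinal.{0}} (J : IdealK κ) : Prop :=
  WeakPPoint J ∧ WeakQPoint J

/-- Weak semi-`Q`-point. -/
def WeakSemiQPoint {κ : Cardinal.{0}} (J : IdealK κ) : Prop :=
  ∀ A ∈ J.plus, ∀ f : Ordinal.{0} → Ordinal.{0},
    (∀ α ∈ A, f α < κ.ord) →
    (∀ β, #{α ∈ A | f α = β} < Cardinal.lift.{1} κ) →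
    ∃ C ∈ J.plus, C ⊆ A ∧ ∀ β < κ.ord, #{α ∈ C | f α = β} ≤ Cardinal.lift.{1} β.card

/-- `P_κ(λ)`, coded as the small subsets of `Iio λ.ord`. -/
def smallSet (κ lam : Cardinal.{0}) : Set (Set Ordinal.{0}) :=
  {a | a ⊆ Iio lam.ord ∧ #a < Cardinal.lift.{1} κ}

/-- The ideal `I_{κ,λ}` of noncofinal subsets of `P_κ(λ)`. -/
def Ikl (κ lam : Cardinal.{0}) : Set (Set (Set Ordinal.{0})) :=
  {A | A ⊆ smallSet κ lam ∧ ∃ a ∈ smallSet κ lam, ∀ b ∈ A, ¬ a ⊆ b}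

/-- A (`κ`-complete fine) ideal on `P_κ(λ)`. -/
structure IdealP (κ lam : Cardinal.{0}) where
  mem : Set (Set (Set Ordinal.{0}))
  subset_pk : ∀ A ∈ mem, A ⊆ smallSet κ lam
  fine : Ikl κ lam ⊆ mem
  subset_mem : ∀ A ∈ mem, ∀ B ⊆ A, B ∈ mem
  sUnion_mem : ∀ X : Set (Set (Set Ordinal.{0})), X ⊆ mem →
    #X < Cardinal.lift.{1} κ → ⋃₀ X ∈ mem
  ne_top : smallSet κ lam ∉ mem

/-- `H⁺` computed from the underlying collection `Hm` of an ideal on `P_κ(λ)`. -/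
def plusOf (κ lam : Cardinal.{0}) (Hm : Set (Set (Set Ordinal.{0}))) :
    Set (Set (Set Ordinal.{0})) :=
  {A | A ⊆ smallSet κ lam ∧ A ∉ Hm}

/-- `H⁺`. -/
def IdealP.plus {κ lam : Cardinal.{0}} (H : IdealP κ lam) : Set (Set (Set Ordinal.{0})) :=
  plusOf κ lam H.mem

/-- `cof(H)`. -/
def IdealP.cof {κ lam : Cardinal.{0}} (H : IdealP κ lam) : Cardinal.{0} :=
  leastCard fun X : Set (Set (Set Ordinal.{0})) =>
    X ⊆ H.mem ∧ ∀ A, A ∈ H.mem ↔ ∃ B ∈ X, A ⊆ B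

/-- `cof̄(H)`. -/
def IdealP.cofBar {κ lam : Cardinal.{0}} (H : IdealP κ lam) : Cardinal.{0} :=
  leastCard fun X : Set (Set (Set Ordinal.{0})) =>
    X ⊆ H.mem ∧ ∀ A ∈ H.mem, ∃ x ⊆ X, #x < Cardinal.lift.{1} κ ∧ A ⊆ ⋃₀ x

/-- `d^κ_{κ,λ}`. -/
def domP (κ lam : Cardinal.{0}) : Cardinal.{0} :=
  leastCard fun F : Set (Ordinal.{0} → Set Ordinal.{0}) =>
    (∀ f ∈ F, ∀ α < κ.ord, f α ∈ smallSet κ lam) ∧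
    ∀ g : Ordinal.{0} → Set Ordinal.{0}, (∀ α < κ.ord, g α ∈ smallSet κ lam) →
      ∃ f ∈ F, ∀ α < κ.ord, g α ⊆ f α

/-- A maximal almost disjoint family of size `≥ κ` for `H` (a member of `M_H^{≥κ}`). -/
def IsMad {κ lam : Cardinal.{0}} (H : IdealP κ lam) (Q : Set (Set (Set Ordinal.{0}))) : Prop :=
  Q ⊆ H.plus ∧ Cardinal.lift.{1} κ ≤ #Q ∧
  (∀ A ∈ Q, ∀ B ∈ Q, A ≠ B → A ∩ B ∈ H.mem) ∧
  ∀ C ∈ H.plus, ∃ A ∈ Q, A ∩ C ∈ H.plus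

/-- The (small) cardinal `c` with `lift c = c'`, used to pull `λ^{<κ} = |P_κ(λ)|` down. -/
def downCard (c : Cardinal.{1}) : Cardinal.{0} :=
  sInf {d : Cardinal.{0} | Cardinal.lift.{1} d = c}

open Classical in
/-- The number `a_H`. -/
def aNum {κ lam : Cardinal.{0}} (H : IdealP κ lam) : Cardinal.{0} :=
  if ∃ Q, IsMad H Q then sInf {c | ∃ Q, IsMad H Q ∧ Cardinal.lift.{1} c = #Q}
  else 2 ^ Order.succ (downCard #(smallSet κ lam))

/-- Weak `π`-point. -/
def WeakPiPoint {κ lam : Cardinal.{0}} (H : IdealP κ lam) : Prop :=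
  ∀ f : Ordinal.{0} → Set (Set Ordinal.{0}), (∀ α < κ.ord, f α ∈ H.mem) →
    ∀ A ∈ H.plus, ∃ B ∈ H.plus, B ⊆ A ∧ ∀ α < κ.ord, B ∩ f α ∈ Ikl κ lam

/-- `∪(a ∩ κ)`. -/
def supK (κ : Cardinal.{0}) (a : Set Ordinal.{0}) : Ordinal.{0} :=
  sSup (a ∩ Iio κ.ord)

/-- The relation `a ≺ b`. -/
def prec (κ : Cardinal.{0}) (a b : Set Ordinal.{0}) : Prop :=
  a ⊆ b ∧ supK κ a < supK κ b

/-- `[A]_κ²`. -/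
def pairsK (κ : Cardinal.{0}) (A : Set (Set Ordinal.{0})) : Set (Ordinal.{0} × Set Ordinal.{0}) :=
  {p | ∃ a ∈ A, ∃ b ∈ A, supK κ a < supK κ b ∧ p = (supK κ a, b)}

/-- `[A]_≺²`. -/
def pairsPrec (κ : Cardinal.{0}) (A : Set (Set Ordinal.{0})) :
    Set (Ordinal.{0} × Set Ordinal.{0}) :=
  {p | ∃ a ∈ A, ∃ b ∈ A, prec κ a b ∧ p = (supK κ a, b)}

/-- `[A]_{κ,κ}²`. -/
def pairsKK (κ : Cardinal.{0}) (A : Set (Set Ordinal.{0})) : Set (Ordinal.{0} × Ordinal.{0}) :=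
  {p | ∃ a ∈ A, ∃ b ∈ A, supK κ a < supK κ b ∧ p = (supK κ a, supK κ b)}

/-- `S` is a set of ordinals of order type `α`. -/
def OrdType (S : Set Ordinal.{0}) (α : Ordinal.{0}) : Prop :=
  ∃ e : Ordinal.{0} → Ordinal.{0},
    (∀ i < α, ∀ j < α, i < j → e i < e j) ∧ e '' Iio α = S

/-- `(B, ≺)` has order type `α`. -/
def OrdTypePrec (κ : Cardinal.{0}) (B : Set (Set Ordinal.{0})) (α : Ordinal.{0}) : Prop :=
  ∃ e : Ordinal.{0} → Set Ordinal.{0},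
    (∀ i < α, ∀ j < α, i < j → prec κ (e i) (e j)) ∧ e '' Iio α = B

/-- The partition relation `κ → (κ, θ)²`. -/
def ArrowKTheta (κ : Cardinal.{0}) (θ : Ordinal.{0}) : Prop :=
  ∀ f : Ordinal.{0} → Ordinal.{0} → Fin 2, ∃ A ⊆ Iio κ.ord,
    (OrdType A κ.ord ∧ ∀ α ∈ A, ∀ β ∈ A, α < β → f α β = 0) ∨
    (OrdType A θ ∧ ∀ α ∈ A, ∀ β ∈ A, α < β → f α β = 1)

/-- `κ` is weakly compact. -/
def WeaklyCompact (κ : Cardinal.{0}) : Prop :=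
  ∀ f : Ordinal.{0} → Ordinal.{0} → Fin 2, ∃ A ⊆ Iio κ.ord,
    OrdType A κ.ord ∧ ∃ i, ∀ α ∈ A, ∀ β ∈ A, α < β → f α β = i

/-- The partition relation `J⁺ → (J⁺, α)²` for an ideal on `κ`. -/
def ArrowJ {κ : Cardinal.{0}} (J : IdealK κ) (α : Ordinal.{0}) : Prop :=
  ∀ A ∈ J.plus, ∀ f : Ordinal.{0} → Ordinal.{0} → Fin 2,
    ∃ B ⊆ A, (B ∈ J.plus ∧ ∀ β ∈ B, ∀ γ ∈ B, β < γ → f β γ = 0) ∨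
             (OrdType B α ∧ ∀ β ∈ B, ∀ γ ∈ B, β < γ → f β γ = 1)

/-- The square bracket relation `J⁺ → [J⁺]_ρ²` for an ideal on `κ`. -/
def SqBrJ {κ : Cardinal.{0}} (J : IdealK κ) (ρ : Cardinal.{0}) : Prop :=
  ∀ A ∈ J.plus, ∀ f : Ordinal.{0} → Ordinal.{0} → Ordinal.{0},
    (∀ β ∈ A, ∀ γ ∈ A, β < γ → f β γ < ρ.ord) →
    ∃ B ∈ J.plus, B ⊆ A ∧ {ξ | ∃ β ∈ B, ∃ γ ∈ B, β < γ ∧ f β γ = ξ} ≠ Iio ρ.ord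

/-- `H⁺ →_κ (H⁺, α)²`. -/
def ArrowP (κ lam : Cardinal.{0}) (Hm : Set (Set (Set Ordinal.{0}))) (α : Ordinal.{0}) : Prop :=
  ∀ F : Ordinal.{0} → Set Ordinal.{0} → Fin 2, ∀ A ∈ plusOf κ lam Hm,
    ∃ B ⊆ A, (B ∈ plusOf κ lam Hm ∧ ∀ p ∈ pairsK κ B, F p.1 p.2 = 0) ∨
             (OrdTypePrec κ B α ∧ ∀ p ∈ pairsK κ B, F p.1 p.2 = 1)

/-- `H⁺ →_{κ,κ} (H⁺, α)²`. -/
def ArrowPKK (κ lam : Cardinal.{0}) (Hm : Set (Set (Set Ordinal.{0}))) (α : Ordinal.{0}) : Prop :=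
  ∀ F : Ordinal.{0} → Ordinal.{0} → Fin 2, ∀ A ∈ plusOf κ lam Hm,
    ∃ B ⊆ A, (B ∈ plusOf κ lam Hm ∧ ∀ p ∈ pairsKK κ B, F p.1 p.2 = 0) ∨
             (OrdTypePrec κ B α ∧ ∀ p ∈ pairsKK κ B, F p.1 p.2 = 1)

/-- `H⁺ →_{κ,κ} (H⁺; α)²`. -/
def ArrowPKKsemi (κ lam : Cardinal.{0}) (Hm : Set (Set (Set Ordinal.{0}))) (α : Ordinal.{0}) :
    Prop :=
  ∀ F : Ordinal.{0} → Ordinal.{0} → Fin 2, ∀ A ∈ plusOf κ lam Hm,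
    ∃ B ⊆ A, (B ∈ plusOf κ lam Hm ∧ ∀ p ∈ pairsKK κ B, F p.1 p.2 = 0) ∨
             (OrdType {o | ∃ a ∈ B, supK κ a = o} α ∧ ∀ p ∈ pairsKK κ B, F p.1 p.2 = 1)

/-- `H⁺ →_κ (H⁺)²`. -/
def ArrowPConst (κ lam : Cardinal.{0}) (Hm : Set (Set (Set Ordinal.{0}))) : Prop :=
  ∀ F : Ordinal.{0} → Set Ordinal.{0} → Fin 2, ∀ A ∈ plusOf κ lam Hm,
    ∃ B ∈ plusOf κ lam Hm, B ⊆ A ∧ ∃ i, ∀ p ∈ pairsK κ B, F p.1 p.2 = i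

/-- `H⁺ →_{κ,κ} [H⁺]_ρ²`. -/
def SqBrPKK (κ lam : Cardinal.{0}) (Hm : Set (Set (Set Ordinal.{0}))) (ρ : Cardinal.{0}) : Prop :=
  ∀ F : Ordinal.{0} → Ordinal.{0} → Ordinal.{0},
    (∀ α β : Ordinal.{0}, α < β → β < κ.ord → F α β < ρ.ord) →
    ∀ A ∈ plusOf κ lam Hm, ∃ B ∈ plusOf κ lam Hm, B ⊆ A ∧
      {ξ | ∃ p ∈ pairsKK κ B, F p.1 p.2 = ξ} ≠ Iio ρ.ord

/-- The class `K(κ,λ)`. -/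
def Kset (κ lam : Cardinal.{0}) : Set Cardinal.{0} :=
  {σ | lam ≤ σ ∧ ∃ T ⊆ smallSet κ lam, Cardinal.lift.{1} σ = #T ∧
    ∀ a ∈ smallSet κ lam, #{t ∈ T | t ⊆ a} < Cardinal.lift.{1} κ}

end

end PaperFormal

namespace PaperFormal

section Aux

open Classical

lemma supK_lt {κ : Cardinal.{0}} (hreg : κ.IsRegular) {a : Set Ordinal.{0}}
    (ha : #a < Cardinal.lift.{1} κ) : supK κ a < κ.ord := by
  set s : Set Ordinal.{0} := a ∩ Iio κ.ord with hs
  have hsmall : Small.{0} s := small_subset inter_subset_right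
  have hmk : #s ≤ #a := Cardinal.mk_le_mk_of_subset inter_subset_left
  have hrange : Set.range (fun i : Shrink.{0} s => ((equivShrink s).symm i : Ordinal.{0})) = s := by
    ext x
    constructor
    · rintro ⟨i, rfl⟩; exact ((equivShrink s).symm i).2
    · intro hx; exact ⟨equivShrink s ⟨x, hx⟩, by simp⟩
  have heq : supK κ a = ⨆ i : Shrink.{0} s, ((equivShrink s).symm i : Ordinal.{0}) := by
    rw [supK, ← hs, iSup, hrange]
  rw [heq]
  apply Ordinal.iSup_lt_ord
  · have h1 : Cardinal.lift.{1} #(Shrink.{0} s) = #s := Cardinal.lift_mk_shrink'' s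
    have h2 : Cardinal.lift.{1} #(Shrink.{0} s) < Cardinal.lift.{1} κ := by
      rw [h1]; exact hmk.trans_lt ha
    rw [Cardinal.lift_lt] at h2
    rwa [hreg.cof_eq]
  · intro i; exact (((equivShrink s).symm i).2).2

lemma fiber_mem_Ikl {κ lam : Cardinal.{0}} (hreg : κ.IsRegular) (huc : ℵ₀ < κ)
    (hlt : κ < lam) {A : Set (Set Ordinal.{0})} (hA : A ⊆ smallSet κ lam)
    {β : Ordinal.{0}} (hβ : β < κ.ord) :
    {a ∈ A | supK κ a = β} ∈ Ikl κ lam := by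
  have hlim := Cardinal.isSuccLimit_ord hreg.aleph0_le
  have hβ1 : β + 1 < κ.ord := by
    rw [Ordinal.add_one_eq_succ]; exact hlim.succ_lt hβ
  refine ⟨fun a ha => hA ha.1, {β + 1}, ⟨?_, ?_⟩, ?_⟩
  · intro x hx
    rw [mem_singleton_iff] at hx
    subst hx
    exact mem_Iio.2 (hβ1.trans_le (Cardinal.ord_le_ord.2 hlt.le))
  · rw [Cardinal.mk_singleton]
    calc (1 : Cardinal.{1}) < ℵ₀ := Cardinal.one_lt_aleph0
      _ = Cardinal.lift.{1} ℵ₀ := by simp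
      _ ≤ Cardinal.lift.{1} κ := Cardinal.lift_le.2 huc.le
  · rintro b ⟨hbA, hsup⟩ hsub
    have hb : b ∈ smallSet κ lam := hA hbA
    have hmem : β + 1 ∈ b ∩ Iio κ.ord := ⟨hsub rfl, hβ1⟩
    have hle : β + 1 ≤ supK κ b :=
      le_csSup (BddAbove.mono inter_subset_right bddAbove_Iio) hmem
    rw [hsup] at hle
    have : β < β + 1 := by
      rw [Ordinal.add_one_eq_succ]; exact Order.lt_succ β
    exact absurd hle (not_le.2 this)

/-- The projection of `H` to an ideal on `κ` relative to `A ∈ H⁺`. -/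
def projIdeal (κ lam : Cardinal.{0}) (H : IdealP κ lam) (A : Set (Set Ordinal.{0}))
    (hreg : κ.IsRegular) (huc : ℵ₀ < κ) (hlt : κ < lam)
    (hA : A ∈ plusOf κ lam H.mem) : IdealK κ where
  mem := {S | S ⊆ Iio κ.ord ∧ {a ∈ A | supK κ a ∈ S} ∈ H.mem}
  subset_iio := fun _ hS => hS.1
  singleton_mem := fun β hβ => by
    refine ⟨?_, ?_⟩
    · intro x hx; rw [mem_singleton_iff] at hx; exact hx ▸ hβ
    · have h := H.fine (fiber_mem_Ikl hreg huc hlt hA.1 hβ)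
      have heq : {a ∈ A | supK κ a ∈ ({β} : Set Ordinal.{0})} = {a ∈ A | supK κ a = β} := by
        ext a; simp [mem_singleton_iff]
      rw [heq]; exact h
  subset_mem := fun S hS T hT =>
    ⟨hT.trans hS.1, H.subset_mem _ hS.2 _ (fun a ha => ⟨ha.1, hT ha.2⟩)⟩
  sUnion_mem := fun X hX hcard => by
    refine ⟨?_, ?_⟩
    · rintro x ⟨S, hS, hx⟩; exact (hX hS).1 hx
    · have heq : {a ∈ A | supK κ a ∈ ⋃₀ X}
          = ⋃₀ ((fun S => {a ∈ A | supK κ a ∈ S}) '' X) := by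
        ext a
        constructor
        · rintro ⟨haA, S, hS, hsup⟩
          exact ⟨_, ⟨S, hS, rfl⟩, haA, hsup⟩
        · rintro ⟨_, ⟨S, hS, rfl⟩, haA, hsup⟩
          exact ⟨haA, S, hS, hsup⟩
      rw [heq]
      refine H.sUnion_mem _ ?_ ?_
      · rintro _ ⟨S, hS, rfl⟩; exact (hX hS).2
      · exact lt_of_le_of_lt (Cardinal.mk_image_le) hcard
  ne_top := fun h => by
    have heq : {a ∈ A | supK κ a ∈ Iio κ.ord} = A := by
      ext a
      refine ⟨fun ha => ha.1, fun ha => ⟨ha, ?_⟩⟩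
      exact supK_lt hreg (hA.1 ha).2
    exact hA.2 (heq ▸ h.2)

lemma cofSet_nonempty {κ lam : Cardinal.{0}} (H : IdealP κ lam) :
    ∃ c : Cardinal.{0}, (∃ F : Set (Set (Set Ordinal.{0})),
      (F ⊆ H.mem ∧ ∀ A, A ∈ H.mem ↔ ∃ B ∈ F, A ⊆ B) ∧ Cardinal.lift.{1} c = #F) := by
  have hP : H.mem ⊆ H.mem ∧ ∀ A, A ∈ H.mem ↔ ∃ B ∈ H.mem, A ⊆ B := by
    refine ⟨subset_rfl, fun A => ⟨fun h => ⟨A, h, subset_rfl⟩, ?_⟩⟩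
    rintro ⟨B, hB, hAB⟩
    exact H.subset_mem B hB A hAB
  -- bound the cardinality of H.mem by a lift
  have h1 : #H.mem ≤ #(Set (↥(smallSet κ lam))) := by
    refine Cardinal.mk_le_of_injective (f := fun B => {x : ↥(smallSet κ lam) | (x : Set Ordinal.{0}) ∈ (B : Set (Set Ordinal.{0}))}) ?_
    intro B B' h
    have h' : ∀ x : ↥(smallSet κ lam), ((x : Set Ordinal.{0}) ∈ (B : Set (Set Ordinal.{0})))
        ↔ ((x : Set Ordinal.{0}) ∈ (B' : Set (Set Ordinal.{0}))) := fun x => Set.ext_iff.mp h x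
    ext1
    ext a
    constructor
    · intro haB
      exact (h' ⟨a, H.subset_pk _ B.2 haB⟩).1 haB
    · intro haB
      exact (h' ⟨a, H.subset_pk _ B'.2 haB⟩).2 haB
  have h2 : #(↥(smallSet κ lam)) ≤ #(Set (↥(Iio lam.ord))) := by
    refine Cardinal.mk_le_of_injective (f := fun a => {x : ↥(Iio lam.ord) | (x : Ordinal.{0}) ∈ (a : Set Ordinal.{0})}) ?_
    intro a a' h
    have h' : ∀ x : ↥(Iio lam.ord), ((x : Ordinal.{0}) ∈ (a : Set Ordinal.{0}))
        ↔ ((x : Ordinal.{0}) ∈ (a' : Set Ordinal.{0})) := fun x => Set.ext_iff.mp h x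
    ext1
    ext o
    constructor
    · intro ho
      exact (h' ⟨o, a.2.1 ho⟩).1 ho
    · intro ho
      exact (h' ⟨o, a'.2.1 ho⟩).2 ho
  have h3 : #(Set (↥(Iio lam.ord))) = (2 : Cardinal.{1}) ^ Cardinal.lift.{1} lam := by
    rw [Cardinal.mk_set, Ordinal.mk_Iio_ordinal, Cardinal.card_ord]
  have h4 : #H.mem ≤ Cardinal.lift.{1} ((2 : Cardinal.{0}) ^ ((2 : Cardinal.{0}) ^ lam)) := by
    calc #H.mem ≤ #(Set (↥(smallSet κ lam))) := h1
      _ = (2 : Cardinal.{1}) ^ #(↥(smallSet κ lam)) := Cardinal.mk_set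
      _ ≤ (2 : Cardinal.{1}) ^ ((2 : Cardinal.{1}) ^ Cardinal.lift.{1} lam) := by
          refine Cardinal.power_le_power_left two_ne_zero ?_
          rw [← h3]; exact h2
      _ = Cardinal.lift.{1} ((2 : Cardinal.{0}) ^ ((2 : Cardinal.{0}) ^ lam)) := by
          rw [Cardinal.lift_two_power, Cardinal.lift_two_power]
  obtain ⟨c, hc⟩ := Cardinal.mem_range_lift_of_le h4
  exact ⟨c, H.mem, hP, hc⟩

end Aux


/-- Suppose `3 ≤ α ≤ κ` and `H` is an ideal on `P_κ(λ)` with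
`cof(H) < non_κ(J⁺ → (J⁺, α)²)`. Then `H⁺ →_{κ,κ} (H⁺; α)²`. -/
theorem arrowPKKsemi_of_cof_lt_non (κ lam : Cardinal.{0}) (hreg : κ.IsRegular) (huc : ℵ₀ < κ)
    (hlt : κ < lam) (α : Ordinal.{0}) (hα3 : 3 ≤ α) (hακ : α ≤ κ.ord)
    (H : IdealP κ lam) (hcof : H.cof < nonK κ (fun J => ArrowJ J α)) :
    ArrowPKKsemi κ lam H.mem α := by
  classical
  intro F A hA
  set J : IdealK κ := projIdeal κ lam H A hreg huc hlt hA with hJdef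
  -- cof(J) ≤ cof(H)
  have hJcof : J.cof ≤ H.cof := by
    have hne := cofSet_nonempty H
    have hmem : H.cof ∈ {c : Cardinal.{0} | ∃ F : Set (Set (Set Ordinal.{0})),
        (F ⊆ H.mem ∧ ∀ A, A ∈ H.mem ↔ ∃ B ∈ F, A ⊆ B) ∧ Cardinal.lift.{1} c = #F} :=
      csInf_mem hne
    obtain ⟨X, ⟨hXsub, hXcof⟩, hXcard⟩ := hmem
    set Y : Set (Set Ordinal.{0}) :=
      (fun B => {β : Ordinal.{0} | β < κ.ord ∧ {a ∈ A | supK κ a = β} ⊆ B}) '' X with hYdef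
    have hYsub : Y ⊆ J.mem := by
      rintro _ ⟨B, hB, rfl⟩
      refine ⟨fun β hβ => hβ.1, ?_⟩
      refine H.subset_mem B (hXsub hB) _ ?_
      rintro a ⟨haA, hβlt, hfib⟩
      exact hfib ⟨haA, rfl⟩
    have hYcof : ∀ S, S ∈ J.mem ↔ ∃ T ∈ Y, S ⊆ T := by
      intro S
      constructor
      · rintro ⟨hSsub, hSmem⟩
        obtain ⟨B, hB, hBsup⟩ := (hXcof _).1 hSmem
        refine ⟨_, ⟨B, hB, rfl⟩, ?_⟩
        intro β hβ
        refine ⟨hSsub hβ, ?_⟩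
        rintro a ⟨haA, rfl⟩
        exact hBsup ⟨haA, hβ⟩
      · rintro ⟨T, hT, hST⟩
        exact J.subset_mem T (hYsub hT) S hST
    have hYcard : #Y ≤ Cardinal.lift.{1} H.cof := by
      rw [hXcard]; exact Cardinal.mk_image_le
    obtain ⟨d, hd⟩ := Cardinal.mem_range_lift_of_le hYcard
    have hdle : d ≤ H.cof := by
      rw [← Cardinal.lift_le (a := d), hd]; exact hYcard
    refine le_trans (csInf_le' ?_) hdle
    exact ⟨Y, ⟨hYsub, hYcof⟩, hd⟩
  -- ArrowJ J α holds
  have hJarrow : ArrowJ J α := by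
    by_contra h
    have : nonK κ (fun J => ArrowJ J α) ≤ J.cof := csInf_le' ⟨J, rfl, h⟩
    exact absurd (lt_of_le_of_lt hJcof hcof) (not_lt.2 this)
  -- the projection of A
  set A' : Set Ordinal.{0} := {β | β < κ.ord ∧ ∃ a ∈ A, supK κ a = β} with hA'def
  have hA'plus : A' ∈ J.plus := by
    refine ⟨fun β hβ => hβ.1, ?_⟩
    intro hmem
    have heq : {a ∈ A | supK κ a ∈ A'} = A := by
      ext a
      refine ⟨fun ha => ha.1, fun ha => ⟨ha, supK_lt hreg (hA.1 ha).2, a, ha, rfl⟩⟩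
    exact hA.2 (heq ▸ hmem.2)
  obtain ⟨B', hB'sub, hcase⟩ := hJarrow A' hA'plus F
  rcases hcase with ⟨hB'plus, h0⟩ | ⟨hot, h1⟩
  · -- homogeneous for 0, positive set
    refine ⟨{a ∈ A | supK κ a ∈ B'}, fun a ha => ha.1,
      Or.inl ⟨⟨fun a ha => hA.1 ha.1, ?_⟩, ?_⟩⟩
    · intro hmem
      exact hB'plus.2 ⟨hB'plus.1, hmem⟩
    · rintro p ⟨a, ha, b, hb, hlt', rfl⟩
      exact h0 _ ha.2 _ hb.2 hlt'
  · -- homogeneous for 1, order type α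
    have hpick : ∀ β ∈ B', ∃ a ∈ A, supK κ a = β := fun β hβ => (hB'sub hβ).2
    set f : Ordinal.{0} → Set Ordinal.{0} :=
      fun β => if h : β ∈ B' then (hpick β h).choose else ∅ with hfdef
    have hf : ∀ β (h : β ∈ B'), f β ∈ A ∧ supK κ (f β) = β := by
      intro β h
      have := (hpick β h).choose_spec
      simp only [hfdef, dif_pos h]
      exact ⟨this.1, this.2⟩
    refine ⟨f '' B', ?_, Or.inr ⟨?_, ?_⟩⟩
    · rintro _ ⟨β, hβ, rfl⟩
      exact (hf β hβ).1
    · have heq : {o | ∃ a ∈ f '' B', supK κ a = o} = B' := by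
        ext o
        constructor
        · rintro ⟨_, ⟨β, hβ, rfl⟩, rfl⟩
          rw [(hf β hβ).2]; exact hβ
        · intro ho
          exact ⟨f o, ⟨o, ho, rfl⟩, (hf o ho).2⟩
      rw [heq]; exact hot
    · rintro p ⟨_, ⟨β, hβ, rfl⟩, _, ⟨γ, hγ, rfl⟩, hlt', rfl⟩
      rw [(hf β hβ).2, (hf γ hγ).2] at *
      exact h1 β hβ γ hγ hlt'


end PaperFormal
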